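/- For every n ≥ 4, the D_n root system X = {±e_i ± e_j : 1 ≤ i < j ≤ n} ⊂ ℝ^n is infinitesimally jammed: every map y : X → ℝ^n satisfying ⟨x, y(x)⟩ = 0 for all x ∈ X and ⟨x, y(x')⟩ + ⟨x', y(x)⟩ ≤ 0 for all distinct x, x' ∈ X with ⟨x, x'⟩ = 1 admits a skew-symmetric linear map Φ : ℝ^n → ℝ^n (⟨Φu, v⟩ = −⟨u, Φv⟩ for all u, v) with y(x) = Φ x for all x ∈ X. -/

import Mathlib

open scoped RealInnerProductSpace

/-- The `Dₙ` root system: all vectors `±eᵢ ± eⱼ` with `i < j`. -/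
def DRootSystem (n : ℕ) : Set (EuclideanSpace ℝ (Fin n)) :=
  { v | ∃ i j : Fin n, i < j ∧ ∃ s t : ℝ, (s = 1 ∨ s = -1) ∧ (t = 1 ∨ t = -1) ∧
      v = s • EuclideanSpace.single i (1 : ℝ) + t • EuclideanSpace.single j (1 : ℝ) }


namespace DJam
variable {n : ℕ}

noncomputable def rt (i j : Fin n) (s t : ℝ) : EuclideanSpace ℝ (Fin n) :=
  s • EuclideanSpace.single i (1 : ℝ) + t • EuclideanSpace.single j (1 : ℝ)

lemma rt_comm (i j : Fin n) (s t : ℝ) : rt i j s t = rt j i t s := add_comm _ _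

lemma rt_apply (i j : Fin n) (s t : ℝ) (m : Fin n) :
    rt i j s t m = (if m = i then s else 0) + (if m = j then t else 0) := by
  simp [rt, EuclideanSpace.single_apply]

lemma inner_rt_left (i j : Fin n) (s t : ℝ) (w : EuclideanSpace ℝ (Fin n)) :
    ⟪rt i j s t, w⟫ = s * w i + t * w j := by
  simp [rt, inner_add_left, real_inner_smul_left, EuclideanSpace.inner_single_left]

lemma mem_rt (i j : Fin n) (hij : i ≠ j) (s t : ℝ) (hs : s = 1 ∨ s = -1) (ht : t = 1 ∨ t = -1) :
    rt i j s t ∈ DRootSystem n := by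
  rcases lt_or_gt_of_ne hij with h | h
  · exact ⟨i, j, h, s, t, hs, ht, rfl⟩
  · exact ⟨j, i, h, t, s, ht, hs, by rw [rt_comm i j s t]; rfl⟩



section
variable (y : EuclideanSpace ℝ (Fin n) → EuclideanSpace ℝ (Fin n))

lemma hS (hSelf : ∀ x ∈ DRootSystem n, ⟪x, y x⟫ = 0)
    (i j : Fin n) (hij : i ≠ j) (s t : ℝ) (hs : s = 1 ∨ s = -1) (ht : t = 1 ∨ t = -1) :
    s * y (rt i j s t) i + t * y (rt i j s t) j = 0 := by
  have h := hSelf _ (mem_rt i j hij s t hs ht)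
  rwa [inner_rt_left] at h

lemma leFF
    (hEdge : ∀ x ∈ DRootSystem n, ∀ x' ∈ DRootSystem n, x ≠ x' → ⟪x, x'⟫ = 1 →
        ⟪x, y x'⟫ + ⟪x', y x⟫ ≤ 0)
    (i j k : Fin n) (hij : i ≠ j) (hik : i ≠ k) (hjk : j ≠ k) (s t u : ℝ)
    (hs : s = 1 ∨ s = -1) (ht : t = 1 ∨ t = -1) (hu : u = 1 ∨ u = -1) :
    s * y (rt i k s u) i + t * y (rt i k s u) j + (s * y (rt i j s t) i + u * y (rt i j s t) k) ≤ 0 := by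
  have hne : rt i j s t ≠ rt i k s u := by
    intro H
    have hcomp : rt i j s t j = rt i k s u j := by rw [H]
    rw [rt_apply, rt_apply, if_neg (Ne.symm hij), if_pos rfl, if_neg hjk] at hcomp
    rcases ht with rfl | rfl <;> norm_num at hcomp
  have hip : ⟪rt i j s t, rt i k s u⟫ = 1 := by
    rw [inner_rt_left, rt_apply, rt_apply, if_pos rfl, if_neg hik, if_neg (Ne.symm hij), if_neg hjk]
    rcases hs with rfl | rfl <;> norm_num
  have h := hEdge _ (mem_rt i j hij s t hs ht) _ (mem_rt i k hik s u hs hu) hne hip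
  rwa [inner_rt_left, inner_rt_left] at h



lemma leFS (y : EuclideanSpace ℝ (Fin n) → EuclideanSpace ℝ (Fin n))
    (hEdge : ∀ x ∈ DRootSystem n, ∀ x' ∈ DRootSystem n, x ≠ x' → ⟪x, x'⟫ = 1 →
        ⟪x, y x'⟫ + ⟪x', y x⟫ ≤ 0)
    (i j k : Fin n) (hij : i ≠ j) (hik : i ≠ k) (hjk : j ≠ k) (s t u : ℝ)
    (hs : s = 1 ∨ s = -1) (ht : t = 1 ∨ t = -1) (hu : u = 1 ∨ u = -1) :
    s * y (rt j k t u) i + t * y (rt j k t u) j + (t * y (rt i j s t) j + u * y (rt i j s t) k) ≤ 0 := by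
  have h := leFF y hEdge j i k hij.symm hjk hik t s u ht hs hu
  rw [rt_comm j i t s] at h
  linarith

lemma leSS (y : EuclideanSpace ℝ (Fin n) → EuclideanSpace ℝ (Fin n))
    (hEdge : ∀ x ∈ DRootSystem n, ∀ x' ∈ DRootSystem n, x ≠ x' → ⟪x, x'⟫ = 1 →
        ⟪x, y x'⟫ + ⟪x', y x⟫ ≤ 0)
    (i j k : Fin n) (hij : i ≠ j) (hik : i ≠ k) (hjk : j ≠ k) (s t u : ℝ)
    (hs : s = 1 ∨ s = -1) (ht : t = 1 ∨ t = -1) (hu : u = 1 ∨ u = -1) :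
    s * y (rt j k u t) i + t * y (rt j k u t) k + (u * y (rt i k s t) j + t * y (rt i k s t) k) ≤ 0 := by
  have h := leFF y hEdge k i j hik.symm hjk.symm hij t s u ht hs hu
  rw [rt_comm k j t u, rt_comm k i t s] at h
  linarith

lemma eqFF (y : EuclideanSpace ℝ (Fin n) → EuclideanSpace ℝ (Fin n))
    (hSelf : ∀ x ∈ DRootSystem n, ⟪x, y x⟫ = 0)
    (hEdge : ∀ x ∈ DRootSystem n, ∀ x' ∈ DRootSystem n, x ≠ x' → ⟪x, x'⟫ = 1 →
        ⟪x, y x'⟫ + ⟪x', y x⟫ ≤ 0)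
    (i j k : Fin n) (hij : i ≠ j) (hik : i ≠ k) (hjk : j ≠ k) (s t u : ℝ)
    (hs : s = 1 ∨ s = -1) (ht : t = 1 ∨ t = -1) (hu : u = 1 ∨ u = -1) :
    s * y (rt i k s u) i + t * y (rt i k s u) j + (s * y (rt i j s t) i + u * y (rt i j s t) k) = 0 := by
  have h0 := leFF y hEdge i j k hij hik hjk 1 1 1 (Or.inl rfl) (Or.inl rfl) (Or.inl rfl)
  have h1 := leFF y hEdge i j k hij hik hjk 1 1 (-1) (Or.inl rfl) (Or.inl rfl) (Or.inr rfl)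
  have h2 := leFF y hEdge i j k hij hik hjk 1 (-1) 1 (Or.inl rfl) (Or.inr rfl) (Or.inl rfl)
  have h3 := leFF y hEdge i j k hij hik hjk 1 (-1) (-1) (Or.inl rfl) (Or.inr rfl) (Or.inr rfl)
  have h4 := leFF y hEdge i j k hij hik hjk (-1) 1 1 (Or.inr rfl) (Or.inl rfl) (Or.inl rfl)
  have h5 := leFF y hEdge i j k hij hik hjk (-1) 1 (-1) (Or.inr rfl) (Or.inl rfl) (Or.inr rfl)
  have h6 := leFF y hEdge i j k hij hik hjk (-1) (-1) 1 (Or.inr rfl) (Or.inr rfl) (Or.inl rfl)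
  have h7 := leFF y hEdge i j k hij hik hjk (-1) (-1) (-1) (Or.inr rfl) (Or.inr rfl) (Or.inr rfl)
  have h8 := leFS y hEdge i j k hij hik hjk 1 1 1 (Or.inl rfl) (Or.inl rfl) (Or.inl rfl)
  have h9 := leFS y hEdge i j k hij hik hjk 1 1 (-1) (Or.inl rfl) (Or.inl rfl) (Or.inr rfl)
  have h10 := leFS y hEdge i j k hij hik hjk 1 (-1) 1 (Or.inl rfl) (Or.inr rfl) (Or.inl rfl)
  have h11 := leFS y hEdge i j k hij hik hjk 1 (-1) (-1) (Or.inl rfl) (Or.inr rfl) (Or.inr rfl)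
  have h12 := leFS y hEdge i j k hij hik hjk (-1) 1 1 (Or.inr rfl) (Or.inl rfl) (Or.inl rfl)
  have h13 := leFS y hEdge i j k hij hik hjk (-1) 1 (-1) (Or.inr rfl) (Or.inl rfl) (Or.inr rfl)
  have h14 := leFS y hEdge i j k hij hik hjk (-1) (-1) 1 (Or.inr rfl) (Or.inr rfl) (Or.inl rfl)
  have h15 := leFS y hEdge i j k hij hik hjk (-1) (-1) (-1) (Or.inr rfl) (Or.inr rfl) (Or.inr rfl)
  have h16 := leSS y hEdge i j k hij hik hjk 1 1 1 (Or.inl rfl) (Or.inl rfl) (Or.inl rfl)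
  have h17 := leSS y hEdge i j k hij hik hjk 1 1 (-1) (Or.inl rfl) (Or.inl rfl) (Or.inr rfl)
  have h18 := leSS y hEdge i j k hij hik hjk 1 (-1) 1 (Or.inl rfl) (Or.inr rfl) (Or.inl rfl)
  have h19 := leSS y hEdge i j k hij hik hjk 1 (-1) (-1) (Or.inl rfl) (Or.inr rfl) (Or.inr rfl)
  have h20 := leSS y hEdge i j k hij hik hjk (-1) 1 1 (Or.inr rfl) (Or.inl rfl) (Or.inl rfl)
  have h21 := leSS y hEdge i j k hij hik hjk (-1) 1 (-1) (Or.inr rfl) (Or.inl rfl) (Or.inr rfl)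
  have h22 := leSS y hEdge i j k hij hik hjk (-1) (-1) 1 (Or.inr rfl) (Or.inr rfl) (Or.inl rfl)
  have h23 := leSS y hEdge i j k hij hik hjk (-1) (-1) (-1) (Or.inr rfl) (Or.inr rfl) (Or.inr rfl)
  have h24 := hS y hSelf i j hij 1 1 (Or.inl rfl) (Or.inl rfl)
  have h25 := hS y hSelf i j hij 1 (-1) (Or.inl rfl) (Or.inr rfl)
  have h26 := hS y hSelf i j hij (-1) 1 (Or.inr rfl) (Or.inl rfl)
  have h27 := hS y hSelf i j hij (-1) (-1) (Or.inr rfl) (Or.inr rfl)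
  have h28 := hS y hSelf i k hik 1 1 (Or.inl rfl) (Or.inl rfl)
  have h29 := hS y hSelf i k hik 1 (-1) (Or.inl rfl) (Or.inr rfl)
  have h30 := hS y hSelf i k hik (-1) 1 (Or.inr rfl) (Or.inl rfl)
  have h31 := hS y hSelf i k hik (-1) (-1) (Or.inr rfl) (Or.inr rfl)
  have h32 := hS y hSelf j k hjk 1 1 (Or.inl rfl) (Or.inl rfl)
  have h33 := hS y hSelf j k hjk 1 (-1) (Or.inl rfl) (Or.inr rfl)
  have h34 := hS y hSelf j k hjk (-1) 1 (Or.inr rfl) (Or.inl rfl)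
  have h35 := hS y hSelf j k hjk (-1) (-1) (Or.inr rfl) (Or.inr rfl)
  rcases hs with rfl | rfl <;> rcases ht with rfl | rfl <;> rcases hu with rfl | rfl <;>
    linarith [h0, h1, h2, h3, h4, h5, h6, h7, h8, h9, h10, h11, h12, h13, h14, h15, h16, h17, h18, h19, h20, h21, h22, h23, h24, h25, h26, h27, h28, h29, h30, h31, h32, h33, h34, h35]

lemma eqFS (y : EuclideanSpace ℝ (Fin n) → EuclideanSpace ℝ (Fin n))
    (hSelf : ∀ x ∈ DRootSystem n, ⟪x, y x⟫ = 0)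
    (hEdge : ∀ x ∈ DRootSystem n, ∀ x' ∈ DRootSystem n, x ≠ x' → ⟪x, x'⟫ = 1 →
        ⟪x, y x'⟫ + ⟪x', y x⟫ ≤ 0)
    (i j k : Fin n) (hij : i ≠ j) (hik : i ≠ k) (hjk : j ≠ k) (s t u : ℝ)
    (hs : s = 1 ∨ s = -1) (ht : t = 1 ∨ t = -1) (hu : u = 1 ∨ u = -1) :
    s * y (rt j k t u) i + t * y (rt j k t u) j + (t * y (rt i j s t) j + u * y (rt i j s t) k) = 0 := by
  have h := eqFF y hSelf hEdge j i k hij.symm hjk hik t s u ht hs hu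
  rw [rt_comm j i t s] at h
  linarith

lemma eqSS (y : EuclideanSpace ℝ (Fin n) → EuclideanSpace ℝ (Fin n))
    (hSelf : ∀ x ∈ DRootSystem n, ⟪x, y x⟫ = 0)
    (hEdge : ∀ x ∈ DRootSystem n, ∀ x' ∈ DRootSystem n, x ≠ x' → ⟪x, x'⟫ = 1 →
        ⟪x, y x'⟫ + ⟪x', y x⟫ ≤ 0)
    (i j k : Fin n) (hij : i ≠ j) (hik : i ≠ k) (hjk : j ≠ k) (s t u : ℝ)
    (hs : s = 1 ∨ s = -1) (ht : t = 1 ∨ t = -1) (hu : u = 1 ∨ u = -1) :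
    s * y (rt j k u t) i + t * y (rt j k u t) k + (u * y (rt i k s t) j + t * y (rt i k s t) k) = 0 := by
  have h := eqFF y hSelf hEdge k i j hik.symm hjk.symm hij t s u ht hs hu
  rw [rt_comm k j t u, rt_comm k i t s] at h
  linarith

lemma recon (y : EuclideanSpace ℝ (Fin n) → EuclideanSpace ℝ (Fin n))
    (hSelf : ∀ x ∈ DRootSystem n, ⟪x, y x⟫ = 0)
    (hEdge : ∀ x ∈ DRootSystem n, ∀ x' ∈ DRootSystem n, x ≠ x' → ⟪x, x'⟫ = 1 →
        ⟪x, y x'⟫ + ⟪x', y x⟫ ≤ 0)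
    (a b c d : Fin n) (hab : a ≠ b) (hac : a ≠ c) (had : a ≠ d)
    (hbc : b ≠ c) (hbd : b ≠ d) (hcd : c ≠ d) (s t : ℝ)
    (hs : s = 1 ∨ s = -1) (ht : t = 1 ∨ t = -1) :
    y (rt a b s t) b = s * y (rt a b 1 1) b ∧
    y (rt a b s t) a = t * y (rt a b 1 1) a ∧
    y (rt a b s t) c = s * y (rt a c 1 1) c + t * y (rt b c 1 1) c := by
  rcases hs with rfl | rfl <;> rcases ht with rfl | rfl
  · exact ⟨by ring, by ring, by linear_combination (-1/2 : ℝ) * (eqSS y hSelf hEdge a b c hab hac hbc 1 1 1 (Or.inl rfl) (Or.inl rfl) (Or.inl rfl)) + (1/2 : ℝ) * (eqFF y hSelf hEdge a b c hab hac hbc 1 1 1 (Or.inl rfl) (Or.inl rfl) (Or.inl rfl)) + (-1/2 : ℝ) * (hS y hSelf a b hab 1 1 (Or.inl rfl) (Or.inl rfl)) + (-1/2 : ℝ) * (hS y hSelf a c hac 1 1 (Or.inl rfl) (Or.inl rfl)) + (1/2 : ℝ) * (eqFS y hSelf hEdge a b c hab hac hbc 1 1 1 (Or.inl rfl) (Or.inl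 rfl) (Or.inl rfl)) + (-1/2 : ℝ) * (hS y hSelf b c hbc 1 1 (Or.inl rfl) (Or.inl rfl))⟩
  · exact ⟨by linear_combination (1/4 : ℝ) * (eqFF y hSelf hEdge a b c hab hac hbc 1 1 1 (Or.inl rfl) (Or.inl rfl) (Or.inl rfl)) + (-1 : ℝ) * (hS y hSelf a b hab 1 1 (Or.inl rfl) (Or.inl rfl)) + (1/4 : ℝ) * (eqFF y hSelf hEdge a b c hab hac hbc 1 (-1) 1 (Or.inl rfl) (Or.inr rfl) (Or.inl rfl)) + (-1 : ℝ) * (hS y hSelf a b hab 1 (-1) (Or.inl rfl) (Or.inr rfl)) + (-1/4 : ℝ) * (eqFF y hSelf hEdge a c d hac had hcd 1 (-1) (-1) (Or.inl rfl) (Or.inr rfl) (Or.inr rfl)) + (1/4 : ℝ) * (eqFF y hSelf hEdge a b c hab hac hbc 1 (-1) (-1) (Or.inl rfl) (Or.inr rfl) (Or.inr rfl)) + (1/4 : ℝ) * (eqFF y hSelf hEdge a b c hab hac hbc 1 1 (-1) (Or.inl rfl) (Or.inl rfl) (Or.inr rfl)) + (1/4 : ℝ) * (eqFF y hSelf hEdge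 a b d hab had hbd 1 (-1) (-1) (Or.inl rfl) (Or.inr rfl) (Or.inr rfl)) + (1/4 : ℝ) * (eqFF y hSelf hEdge a b d hab had hbd 1 1 (-1) (Or.inl rfl) (Or.inl rfl) (Or.inr rfl)) + (1/4 : ℝ) * (eqFF y hSelf hEdge a b d hab had hbd 1 (-1) 1 (Or.inl rfl) (Or.inr rfl) (Or.inl rfl)) + (1/4 : ℝ) * (eqFF y hSelf hEdge a b d hab had hbd 1 1 1 (Or.inl rfl) (Or.inl rfl) (Or.inl rfl)) + (-1/4 : ℝ) * (eqFF y hSelf hEdge a c d hac had hcd 1 1 (-1) (Or.inl rfl) (Or.inl rfl) (Or.inr rfl)) + (-1/4 : ℝ) * (eqFF y hSelf hEdge a c d hac had hcd 1 (-1) 1 (Or.inl rfl) (Or.inr rfl) (Or.inl rfl)) + (-1/4 : ℝ) * (eqFF y hSelf hEdge a c d hac had hcd 1 1 1 (Or.inl rfl) (Or.inl rfl) (Or.inl rfl)), by linear_combination (1/4 : ℝ) * (eqFF y hSelf hEdge a b c hab hac hbc 1 1 1 (Or.inl rfl) (Or.inl rfl) (Or.inl rfl)) + (1/4 : ℝ)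 * (eqFF y hSelf hEdge a b c hab hac hbc 1 (-1) 1 (Or.inl rfl) (Or.inr rfl) (Or.inl rfl)) + (-1/4 : ℝ) * (eqFF y hSelf hEdge a c d hac had hcd 1 (-1) (-1) (Or.inl rfl) (Or.inr rfl) (Or.inr rfl)) + (1/4 : ℝ) * (eqFF y hSelf hEdge a b c hab hac hbc 1 (-1) (-1) (Or.inl rfl) (Or.inr rfl) (Or.inr rfl)) + (1/4 : ℝ) * (eqFF y hSelf hEdge a b c hab hac hbc 1 1 (-1) (Or.inl rfl) (Or.inl rfl) (Or.inr rfl)) + (1/4 : ℝ) * (eqFF y hSelf hEdge a b d hab had hbd 1 (-1) (-1) (Or.inl rfl) (Or.inr rfl) (Or.inr rfl)) + (1/4 : ℝ) * (eqFF y hSelf hEdge a b d hab had hbd 1 1 (-1) (Or.inl rfl) (Or.inl rfl) (Or.inr rfl)) + (1/4 : ℝ) * (eqFF y hSelf hEdge a b d hab had hbd 1 (-1) 1 (Or.inl rfl) (Or.inr rfl) (Or.inl rfl)) + (1/4 : ℝ) * (eqFF y hSelf hEdge a b d hab had hbd 1 1 1 (Or.inl rfl) (Or.inl rfl) (Or.inl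 rfl)) + (-1/4 : ℝ) * (eqFF y hSelf hEdge a c d hac had hcd 1 1 (-1) (Or.inl rfl) (Or.inl rfl) (Or.inr rfl)) + (-1/4 : ℝ) * (eqFF y hSelf hEdge a c d hac had hcd 1 (-1) 1 (Or.inl rfl) (Or.inr rfl) (Or.inl rfl)) + (-1/4 : ℝ) * (eqFF y hSelf hEdge a c d hac had hcd 1 1 1 (Or.inl rfl) (Or.inl rfl) (Or.inl rfl)), by linear_combination (1/2 : ℝ) * (eqSS y hSelf hEdge a b c hab hac hbc 1 1 1 (Or.inl rfl) (Or.inl rfl) (Or.inl rfl)) + (1/4 : ℝ) * (eqFF y hSelf hEdge a b c hab hac hbc 1 1 1 (Or.inl rfl) (Or.inl rfl) (Or.inl rfl)) + (1/2 : ℝ) * (hS y hSelf a b hab 1 1 (Or.inl rfl) (Or.inl rfl)) + (-1/2 : ℝ) * (eqFS y hSelf hEdge a b c hab hac hbc 1 1 1 (Or.inl rfl) (Or.inl rfl) (Or.inl rfl)) + (1/2 : ℝ) * (hS y hSelf b c hbc 1 1 (Or.inl rfl) (Or.inl rfl)) + (3/4 : ℝ) * (eqFF y hSelf hEdge a b c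 hab hac hbc 1 (-1) 1 (Or.inl rfl) (Or.inr rfl) (Or.inl rfl)) + (1/4 : ℝ) * (eqFF y hSelf hEdge a c d hac had hcd 1 (-1) (-1) (Or.inl rfl) (Or.inr rfl) (Or.inr rfl)) + (-1/4 : ℝ) * (eqFF y hSelf hEdge a b c hab hac hbc 1 (-1) (-1) (Or.inl rfl) (Or.inr rfl) (Or.inr rfl)) + (-1/4 : ℝ) * (eqFF y hSelf hEdge a b c hab hac hbc 1 1 (-1) (Or.inl rfl) (Or.inl rfl) (Or.inr rfl)) + (-3/2 : ℝ) * (hS y hSelf a c hac 1 1 (Or.inl rfl) (Or.inl rfl)) + (-1/4 : ℝ) * (eqFF y hSelf hEdge a b d hab had hbd 1 (-1) (-1) (Or.inl rfl) (Or.inr rfl) (Or.inr rfl)) + (-1/4 : ℝ) * (eqFF y hSelf hEdge a b d hab had hbd 1 1 (-1) (Or.inl rfl) (Or.inl rfl) (Or.inr rfl)) + (-1/4 : ℝ) * (eqFF y hSelf hEdge a b d hab had hbd 1 (-1) 1 (Or.inl rfl) (Or.inr rfl) (Or.inl rfl)) + (-1/4 : ℝ) * (eqFF y hSelf hEdge a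 b d hab had hbd 1 1 1 (Or.inl rfl) (Or.inl rfl) (Or.inl rfl)) + (1/4 : ℝ) * (eqFF y hSelf hEdge a c d hac had hcd 1 1 (-1) (Or.inl rfl) (Or.inl rfl) (Or.inr rfl)) + (1/4 : ℝ) * (eqFF y hSelf hEdge a c d hac had hcd 1 (-1) 1 (Or.inl rfl) (Or.inr rfl) (Or.inl rfl)) + (1/4 : ℝ) * (eqFF y hSelf hEdge a c d hac had hcd 1 1 1 (Or.inl rfl) (Or.inl rfl) (Or.inl rfl))⟩
  · exact ⟨by linear_combination (1/2 : ℝ) * (eqFS y hSelf hEdge a b c hab hac hbc (-1) 1 1 (Or.inr rfl) (Or.inl rfl) (Or.inl rfl)) + (-1/2 : ℝ) * (hS y hSelf b c hbc 1 1 (Or.inl rfl) (Or.inl rfl)) + (1/2 : ℝ) * (eqSS y hSelf hEdge a b c hab hac hbc 1 1 1 (Or.inl rfl) (Or.inl rfl) (Or.inl rfl)) + (-1/4 : ℝ) * (eqFF y hSelf hEdge a b c hab hac hbc 1 1 1 (Or.inl rfl) (Or.inl rfl) (Or.inl rfl)) + (1 : ℝ) * (hS y hSelf a b hab 1 1 (Or.inl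 rfl) (Or.inl rfl)) + (-1/2 : ℝ) * (hS y hSelf a c hac 1 1 (Or.inl rfl) (Or.inl rfl)) + (1/2 : ℝ) * (eqFS y hSelf hEdge a b c hab hac hbc (-1) 1 (-1) (Or.inr rfl) (Or.inl rfl) (Or.inr rfl)) + (-1/2 : ℝ) * (hS y hSelf b c hbc 1 (-1) (Or.inl rfl) (Or.inr rfl)) + (1/2 : ℝ) * (eqSS y hSelf hEdge a b c hab hac hbc 1 (-1) 1 (Or.inl rfl) (Or.inr rfl) (Or.inl rfl)) + (-1/2 : ℝ) * (hS y hSelf a c hac 1 (-1) (Or.inl rfl) (Or.inr rfl)) + (1/4 : ℝ) * (eqFF y hSelf hEdge a b c hab hac hbc 1 (-1) (-1) (Or.inl rfl) (Or.inr rfl) (Or.inr rfl)) + (1/4 : ℝ) * (eqFF y hSelf hEdge a c d hac had hcd 1 (-1) (-1) (Or.inl rfl) (Or.inr rfl) (Or.inr rfl)) + (-1/4 : ℝ) * (eqFF y hSelf hEdge a b c hab hac hbc 1 1 (-1) (Or.inl rfl) (Or.inl rfl) (Or.inr rfl)) + (-1/4 : ℝ) * (eqFF y hSelf hEdge a b d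 hab had hbd 1 (-1) (-1) (Or.inl rfl) (Or.inr rfl) (Or.inr rfl)) + (1/4 : ℝ) * (eqFF y hSelf hEdge a b c hab hac hbc 1 (-1) 1 (Or.inl rfl) (Or.inr rfl) (Or.inl rfl)) + (-1/4 : ℝ) * (eqFF y hSelf hEdge a b d hab had hbd 1 1 (-1) (Or.inl rfl) (Or.inl rfl) (Or.inr rfl)) + (-1/4 : ℝ) * (eqFF y hSelf hEdge a b d hab had hbd 1 (-1) 1 (Or.inl rfl) (Or.inr rfl) (Or.inl rfl)) + (-1/4 : ℝ) * (eqFF y hSelf hEdge a b d hab had hbd 1 1 1 (Or.inl rfl) (Or.inl rfl) (Or.inl rfl)) + (1/4 : ℝ) * (eqFF y hSelf hEdge a c d hac had hcd 1 1 (-1) (Or.inl rfl) (Or.inl rfl) (Or.inr rfl)) + (1/4 : ℝ) * (eqFF y hSelf hEdge a c d hac had hcd 1 (-1) 1 (Or.inl rfl) (Or.inr rfl) (Or.inl rfl)) + (1/4 : ℝ) * (eqFF y hSelf hEdge a c d hac had hcd 1 1 1 (Or.inl rfl) (Or.inl rfl) (Or.inl rfl)), by linear_combination (-1 : ℝ)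 * (hS y hSelf a b hab (-1) 1 (Or.inr rfl) (Or.inl rfl)) + (1/2 : ℝ) * (eqFS y hSelf hEdge a b c hab hac hbc (-1) 1 1 (Or.inr rfl) (Or.inl rfl) (Or.inl rfl)) + (-1/2 : ℝ) * (hS y hSelf b c hbc 1 1 (Or.inl rfl) (Or.inl rfl)) + (1/2 : ℝ) * (eqSS y hSelf hEdge a b c hab hac hbc 1 1 1 (Or.inl rfl) (Or.inl rfl) (Or.inl rfl)) + (-1/4 : ℝ) * (eqFF y hSelf hEdge a b c hab hac hbc 1 1 1 (Or.inl rfl) (Or.inl rfl) (Or.inl rfl)) + (-1/2 : ℝ) * (hS y hSelf a c hac 1 1 (Or.inl rfl) (Or.inl rfl)) + (1/2 : ℝ) * (eqFS y hSelf hEdge a b c hab hac hbc (-1) 1 (-1) (Or.inr rfl) (Or.inl rfl) (Or.inr rfl)) + (-1/2 : ℝ) * (hS y hSelf b c hbc 1 (-1) (Or.inl rfl) (Or.inr rfl)) + (1/2 : ℝ) * (eqSS y hSelf hEdge a b c hab hac hbc 1 (-1) 1 (Or.inl rfl) (Or.inr rfl) (Or.inl rfl)) + (-1/2 : ℝ)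 * (hS y hSelf a c hac 1 (-1) (Or.inl rfl) (Or.inr rfl)) + (1/4 : ℝ) * (eqFF y hSelf hEdge a b c hab hac hbc 1 (-1) (-1) (Or.inl rfl) (Or.inr rfl) (Or.inr rfl)) + (1/4 : ℝ) * (eqFF y hSelf hEdge a c d hac had hcd 1 (-1) (-1) (Or.inl rfl) (Or.inr rfl) (Or.inr rfl)) + (-1/4 : ℝ) * (eqFF y hSelf hEdge a b c hab hac hbc 1 1 (-1) (Or.inl rfl) (Or.inl rfl) (Or.inr rfl)) + (-1/4 : ℝ) * (eqFF y hSelf hEdge a b d hab had hbd 1 (-1) (-1) (Or.inl rfl) (Or.inr rfl) (Or.inr rfl)) + (1/4 : ℝ) * (eqFF y hSelf hEdge a b c hab hac hbc 1 (-1) 1 (Or.inl rfl) (Or.inr rfl) (Or.inl rfl)) + (-1/4 : ℝ) * (eqFF y hSelf hEdge a b d hab had hbd 1 1 (-1) (Or.inl rfl) (Or.inl rfl) (Or.inr rfl)) + (-1/4 : ℝ) * (eqFF y hSelf hEdge a b d hab had hbd 1 (-1) 1 (Or.inl rfl) (Or.inr rfl) (Or.inl rfl)) + (-1/4 : ℝ)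 * (eqFF y hSelf hEdge a b d hab had hbd 1 1 1 (Or.inl rfl) (Or.inl rfl) (Or.inl rfl)) + (1/4 : ℝ) * (eqFF y hSelf hEdge a c d hac had hcd 1 1 (-1) (Or.inl rfl) (Or.inl rfl) (Or.inr rfl)) + (1/4 : ℝ) * (eqFF y hSelf hEdge a c d hac had hcd 1 (-1) 1 (Or.inl rfl) (Or.inr rfl) (Or.inl rfl)) + (1/4 : ℝ) * (eqFF y hSelf hEdge a c d hac had hcd 1 1 1 (Or.inl rfl) (Or.inl rfl) (Or.inl rfl)), by linear_combination (-1/4 : ℝ) * (eqFF y hSelf hEdge a b c hab hac hbc 1 1 1 (Or.inl rfl) (Or.inl rfl) (Or.inl rfl)) + (-1/2 : ℝ) * (hS y hSelf a b hab 1 1 (Or.inl rfl) (Or.inl rfl)) + (1 : ℝ) * (hS y hSelf a c hac 1 1 (Or.inl rfl) (Or.inl rfl)) + (1/2 : ℝ) * (eqFS y hSelf hEdge a b c hab hac hbc 1 1 1 (Or.inl rfl) (Or.inl rfl) (Or.inl rfl)) + (-1 : ℝ) * (hS y hSelf b c hbc 1 1 (Or.inl rfl) (Or.inl rfl)) + (-1/2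 : ℝ) * (eqFS y hSelf hEdge a b c hab hac hbc (-1) 1 (-1) (Or.inr rfl) (Or.inl rfl) (Or.inr rfl)) + (1/2 : ℝ) * (hS y hSelf b c hbc 1 (-1) (Or.inl rfl) (Or.inr rfl)) + (-1/2 : ℝ) * (eqSS y hSelf hEdge a b c hab hac hbc 1 (-1) 1 (Or.inl rfl) (Or.inr rfl) (Or.inl rfl)) + (1/2 : ℝ) * (hS y hSelf a c hac 1 (-1) (Or.inl rfl) (Or.inr rfl)) + (-1/4 : ℝ) * (eqFF y hSelf hEdge a b c hab hac hbc 1 (-1) (-1) (Or.inl rfl) (Or.inr rfl) (Or.inr rfl)) + (1/2 : ℝ) * (eqFS y hSelf hEdge a b c hab hac hbc (-1) 1 1 (Or.inr rfl) (Or.inl rfl) (Or.inl rfl)) + (-1/4 : ℝ) * (eqFF y hSelf hEdge a c d hac had hcd 1 (-1) (-1) (Or.inl rfl) (Or.inr rfl) (Or.inr rfl)) + (1/4 : ℝ) * (eqFF y hSelf hEdge a b c hab hac hbc 1 1 (-1) (Or.inl rfl) (Or.inl rfl) (Or.inr rfl)) + (1/4 : ℝ) * (eqFF y hSelf hEdge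 a b d hab had hbd 1 (-1) (-1) (Or.inl rfl) (Or.inr rfl) (Or.inr rfl)) + (-1/4 : ℝ) * (eqFF y hSelf hEdge a b c hab hac hbc 1 (-1) 1 (Or.inl rfl) (Or.inr rfl) (Or.inl rfl)) + (1/4 : ℝ) * (eqFF y hSelf hEdge a b d hab had hbd 1 1 (-1) (Or.inl rfl) (Or.inl rfl) (Or.inr rfl)) + (1/4 : ℝ) * (eqFF y hSelf hEdge a b d hab had hbd 1 (-1) 1 (Or.inl rfl) (Or.inr rfl) (Or.inl rfl)) + (1/4 : ℝ) * (eqFF y hSelf hEdge a b d hab had hbd 1 1 1 (Or.inl rfl) (Or.inl rfl) (Or.inl rfl)) + (-1/4 : ℝ) * (eqFF y hSelf hEdge a c d hac had hcd 1 1 (-1) (Or.inl rfl) (Or.inl rfl) (Or.inr rfl)) + (-1/4 : ℝ) * (eqFF y hSelf hEdge a c d hac had hcd 1 (-1) 1 (Or.inl rfl) (Or.inr rfl) (Or.inl rfl)) + (-1/4 : ℝ) * (eqFF y hSelf hEdge a c d hac had hcd 1 1 1 (Or.inl rfl) (Or.inl rfl) (Or.inl rfl))⟩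
  · exact ⟨by linear_combination (-1/2 : ℝ) * (eqFS y hSelf hEdge a b c hab hac hbc (-1) (-1) 1 (Or.inr rfl) (Or.inr rfl) (Or.inl rfl)) + (1/2 : ℝ) * (hS y hSelf b c hbc (-1) 1 (Or.inr rfl) (Or.inl rfl)) + (-1/2 : ℝ) * (eqSS y hSelf hEdge a b c hab hac hbc 1 1 (-1) (Or.inl rfl) (Or.inl rfl) (Or.inr rfl)) + (-1/2 : ℝ) * (eqFF y hSelf hEdge a b c hab hac hbc 1 1 1 (Or.inl rfl) (Or.inl rfl) (Or.inl rfl)) + (1/2 : ℝ) * (hS y hSelf a b hab 1 1 (Or.inl rfl) (Or.inl rfl)) + (1/2 : ℝ) * (hS y hSelf a c hac 1 1 (Or.inl rfl) (Or.inl rfl)) + (1/2 : ℝ) * (eqFF y hSelf hEdge a b c hab hac hbc (-1) (-1) 1 (Or.inr rfl) (Or.inr rfl) (Or.inl rfl)) + (-1/2 : ℝ) * (hS y hSelf a b hab (-1) (-1) (Or.inr rfl) (Or.inr rfl)) + (-1/2 : ℝ) * (hS y hSelf a c hac (-1) 1 (Or.inr rfl) (Or.inl rfl)) + (-1/2 :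 ℝ) * (hS y hSelf b c hbc 1 1 (Or.inl rfl) (Or.inl rfl)) + (1/2 : ℝ) * (eqSS y hSelf hEdge a b c hab hac hbc (-1) 1 1 (Or.inr rfl) (Or.inl rfl) (Or.inl rfl)) + (1/2 : ℝ) * (eqFS y hSelf hEdge a b c hab hac hbc 1 1 1 (Or.inl rfl) (Or.inl rfl) (Or.inl rfl)), by linear_combination (1/2 : ℝ) * (hS y hSelf a b hab 1 1 (Or.inl rfl) (Or.inl rfl)) + (-1/2 : ℝ) * (hS y hSelf a b hab (-1) (-1) (Or.inr rfl) (Or.inr rfl)) + (1/2 : ℝ) * (eqFS y hSelf hEdge a b c hab hac hbc (-1) (-1) 1 (Or.inr rfl) (Or.inr rfl) (Or.inl rfl)) + (-1/2 : ℝ) * (hS y hSelf b c hbc (-1) 1 (Or.inr rfl) (Or.inl rfl)) + (1/2 : ℝ) * (eqSS y hSelf hEdge a b c hab hac hbc 1 1 (-1) (Or.inl rfl) (Or.inl rfl) (Or.inr rfl)) + (1/2 : ℝ) * (eqFF y hSelf hEdge a b c hab hac hbc 1 1 1 (Or.inl rfl) (Or.inl rfl) (Or.inl rfl)) + (-1/2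 : ℝ) * (hS y hSelf a c hac 1 1 (Or.inl rfl) (Or.inl rfl)) + (-1/2 : ℝ) * (eqFF y hSelf hEdge a b c hab hac hbc (-1) (-1) 1 (Or.inr rfl) (Or.inr rfl) (Or.inl rfl)) + (1/2 : ℝ) * (hS y hSelf a c hac (-1) 1 (Or.inr rfl) (Or.inl rfl)) + (1/2 : ℝ) * (hS y hSelf b c hbc 1 1 (Or.inl rfl) (Or.inl rfl)) + (-1/2 : ℝ) * (eqSS y hSelf hEdge a b c hab hac hbc (-1) 1 1 (Or.inr rfl) (Or.inl rfl) (Or.inl rfl)) + (-1/2 : ℝ) * (eqFS y hSelf hEdge a b c hab hac hbc 1 1 1 (Or.inl rfl) (Or.inl rfl) (Or.inl rfl)), by linear_combination (1/2 : ℝ) * (eqSS y hSelf hEdge a b c hab hac hbc 1 1 1 (Or.inl rfl) (Or.inl rfl) (Or.inl rfl)) + (1/2 : ℝ) * (eqFF y hSelf hEdge a b c hab hac hbc (-1) (-1) 1 (Or.inr rfl) (Or.inr rfl) (Or.inl rfl)) + (-1/2 : ℝ) * (hS y hSelf a b hab (-1) (-1) (Or.inr rfl) (Or.inr rfl)) +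 (-1/2 : ℝ) * (hS y hSelf a c hac (-1) 1 (Or.inr rfl) (Or.inl rfl)) + (1/2 : ℝ) * (eqSS y hSelf hEdge a b c hab hac hbc (-1) 1 1 (Or.inr rfl) (Or.inl rfl) (Or.inl rfl)) + (1/2 : ℝ) * (eqFS y hSelf hEdge a b c hab hac hbc (-1) (-1) 1 (Or.inr rfl) (Or.inr rfl) (Or.inl rfl)) + (-1/2 : ℝ) * (hS y hSelf b c hbc (-1) 1 (Or.inr rfl) (Or.inl rfl)) + (1/2 : ℝ) * (eqSS y hSelf hEdge a b c hab hac hbc 1 1 (-1) (Or.inl rfl) (Or.inl rfl) (Or.inr rfl))⟩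

noncomputable def Amat (y : EuclideanSpace ℝ (Fin n) → EuclideanSpace ℝ (Fin n))
    (k i : Fin n) : ℝ :=
  if k = i then 0 else y (rt i k 1 1) k

lemma Amat_skew (y : EuclideanSpace ℝ (Fin n) → EuclideanSpace ℝ (Fin n))
    (hSelf : ∀ x ∈ DRootSystem n, ⟪x, y x⟫ = 0) (k i : Fin n) :
    Amat y i k = -Amat y k i := by
  by_cases h : k = i
  · subst h; simp [Amat]
  · simp only [Amat, if_neg h, if_neg (Ne.symm h)]
    have h2 := hS y hSelf i k (Ne.symm h) 1 1 (Or.inl rfl) (Or.inl rfl)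
    rw [rt_comm k i 1 1]
    linarith

noncomputable def Phi (y : EuclideanSpace ℝ (Fin n) → EuclideanSpace ℝ (Fin n)) :
    EuclideanSpace ℝ (Fin n) →ₗ[ℝ] EuclideanSpace ℝ (Fin n) where
  toFun v := WithLp.toLp 2 (fun m => ∑ i, Amat y m i * v i)
  map_add' u v := by
    ext m
    simp only [PiLp.toLp_apply, PiLp.add_apply, mul_add, Finset.sum_add_distrib]
  map_smul' c v := by
    ext m
    simp only [PiLp.toLp_apply, PiLp.smul_apply, smul_eq_mul, RingHom.id_apply, Finset.mul_sum]
    exact Finset.sum_congr rfl fun i _ => by ring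

lemma Phi_apply (y : EuclideanSpace ℝ (Fin n) → EuclideanSpace ℝ (Fin n))
    (v : EuclideanSpace ℝ (Fin n)) (m : Fin n) :
    Phi y v m = ∑ i, Amat y m i * v i := rfl

lemma Phi_skew (y : EuclideanSpace ℝ (Fin n) → EuclideanSpace ℝ (Fin n))
    (hSelf : ∀ x ∈ DRootSystem n, ⟪x, y x⟫ = 0)
    (u v : EuclideanSpace ℝ (Fin n)) :
    ⟪Phi y u, v⟫ = -⟪u, Phi y v⟫ := by
  simp only [PiLp.inner_apply, RCLike.inner_apply, conj_trivial, Phi_apply]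
  rw [← Finset.sum_neg_distrib]
  rw [show (∑ m, v m * ∑ i, Amat y m i * u i) = ∑ m, ∑ i, Amat y m i * u i * v m by
    exact Finset.sum_congr rfl fun m _ => by rw [Finset.mul_sum]; exact Finset.sum_congr rfl fun i _ => by ring]
  rw [Finset.sum_comm]
  refine Finset.sum_congr rfl fun m _ => ?_
  rw [Finset.sum_mul, ← Finset.sum_neg_distrib]
  refine Finset.sum_congr rfl fun i _ => ?_
  rw [Amat_skew y hSelf i m]
  ring

end
end DJam

open DJam

theorem statement4 (n : ℕ) (hn : 4 ≤ n) :
    ∀ y : EuclideanSpace ℝ (Fin n) → EuclideanSpace ℝ (Fin n),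
      (∀ x ∈ DRootSystem n, ⟪x, y x⟫ = 0) →
      (∀ x ∈ DRootSystem n, ∀ x' ∈ DRootSystem n, x ≠ x' → ⟪x, x'⟫ = 1 →
        ⟪x, y x'⟫ + ⟪x', y x⟫ ≤ 0) →
      ∃ Φ : EuclideanSpace ℝ (Fin n) →ₗ[ℝ] EuclideanSpace ℝ (Fin n),
        (∀ u v, ⟪Φ u, v⟫ = -⟪u, Φ v⟫) ∧ ∀ x ∈ DRootSystem n, y x = Φ x := by
  intro y hSelf hEdge
  refine ⟨Phi y, fun u v => Phi_skew y hSelf u v, ?_⟩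
  rintro x ⟨i, j, hij, s, t, hs, ht, rfl⟩
  have hij' : i ≠ j := ne_of_lt hij
  show y (rt i j s t) = Phi y (rt i j s t)
  ext m
  have hPhi : Phi y (rt i j s t) m = Amat y m i * s + Amat y m j * t := by
    rw [Phi_apply]
    simp only [rt_apply, mul_add, mul_ite, mul_zero, Finset.sum_add_distrib,
      Finset.sum_ite_eq', Finset.mem_univ, if_pos]
  rw [hPhi]
  by_cases hmi : m = i
  · subst hmi
    obtain ⟨k, l, hkl, hmk, hml, hjk, hjl⟩ :
        ∃ k l : Fin n, k ≠ l ∧ m ≠ k ∧ m ≠ l ∧ j ≠ k ∧ j ≠ l := by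
      have hcard : 1 < (Finset.univ \ {m, j} : Finset (Fin n)).card := by
        rw [Finset.card_sdiff_of_subset (Finset.subset_univ _)]
        have h2 : ({m, j} : Finset (Fin n)).card ≤ 2 :=
          le_trans (Finset.card_insert_le _ _) (by simp)
        have h3 : (Finset.univ : Finset (Fin n)).card = n := by simp
        omega
      obtain ⟨k, hk, l, hl, hkl⟩ := Finset.one_lt_card.mp hcard
      simp only [Finset.mem_sdiff, Finset.mem_univ, true_and, Finset.mem_insert,
        Finset.mem_singleton, not_or] at hk hl
      exact ⟨k, l, hkl, fun h => hk.1 h.symm, fun h => hl.1 h.symm,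
        fun h => hk.2 h.symm, fun h => hl.2 h.symm⟩
    have h := (recon y hSelf hEdge m j k l hij' hmk hml hjk hjl hkl s t hs ht).2.1
    rw [h]
    simp only [Amat]
    rw [if_true, if_neg hij', rt_comm j m 1 1]
    ring
  by_cases hmj : m = j
  · subst hmj
    obtain ⟨k, l, hkl, hik, hil, hmk, hml⟩ :
        ∃ k l : Fin n, k ≠ l ∧ i ≠ k ∧ i ≠ l ∧ m ≠ k ∧ m ≠ l := by
      have hcard : 1 < (Finset.univ \ {i, m} : Finset (Fin n)).card := by
        rw [Finset.card_sdiff_of_subset (Finset.subset_univ _)]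
        have h2 : ({i, m} : Finset (Fin n)).card ≤ 2 :=
          le_trans (Finset.card_insert_le _ _) (by simp)
        have h3 : (Finset.univ : Finset (Fin n)).card = n := by simp
        omega
      obtain ⟨k, hk, l, hl, hkl⟩ := Finset.one_lt_card.mp hcard
      simp only [Finset.mem_sdiff, Finset.mem_univ, true_and, Finset.mem_insert,
        Finset.mem_singleton, not_or] at hk hl
      exact ⟨k, l, hkl, fun h => hk.1 h.symm, fun h => hl.1 h.symm,
        fun h => hk.2 h.symm, fun h => hl.2 h.symm⟩
    have h := (recon y hSelf hEdge i m k l hij' hik hil hmk hml hkl s t hs ht).1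
    rw [h]
    simp only [Amat]
    rw [if_neg hmi, if_true]
    ring
  · have him : i ≠ m := fun h => hmi h.symm
    have hjm : j ≠ m := fun h => hmj h.symm
    obtain ⟨l, hil, hjl, hml⟩ : ∃ l : Fin n, i ≠ l ∧ j ≠ l ∧ m ≠ l := by
      have hcard : 0 < (Finset.univ \ {i, j, m} : Finset (Fin n)).card := by
        rw [Finset.card_sdiff_of_subset (Finset.subset_univ _)]
        have h2 : ({i, j, m} : Finset (Fin n)).card ≤ 3 := by
          refine le_trans (Finset.card_insert_le _ _) ?_
          have h4 := Finset.card_insert_le j ({m} : Finset (Fin n))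
          simp only [Finset.card_singleton] at h4 ⊢
          omega
        have h3 : (Finset.univ : Finset (Fin n)).card = n := by simp
        omega
      obtain ⟨l, hl⟩ := Finset.card_pos.mp hcard
      simp only [Finset.mem_sdiff, Finset.mem_univ, true_and, Finset.mem_insert,
        Finset.mem_singleton, not_or] at hl
      exact ⟨l, fun h => hl.1 h.symm, fun h => hl.2.1 h.symm, fun h => hl.2.2 h.symm⟩
    have h := (recon y hSelf hEdge i j m l hij' him hil hjm hjl hml s t hs ht).2.2
    rw [h]
    simp only [Amat, if_neg hmi, if_neg hmj]
    ring
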